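/- For any POVM A, the Lüders channel Λ_A^L(ρ) = Σ_x √A(x) ρ √A(x) satisfies Fix((Λ_A^L)*) = {A(x)}'_x, the commutant of the effects of A. -/

import Mathlib

open Matrix
open scoped ComplexOrder

abbrev Mat (d : ℕ) := Matrix (Fin d) (Fin d) ℂ

/-- A quantum state (density operator). -/
def IsState {d : ℕ} (ρ : Mat d) : Prop := ρ.PosSemidef ∧ ρ.trace = 1

/-- A POVM (observable with finite outcome set). -/
def IsPOVM {d : ℕ} {ι : Type} [Fintype ι] (A : ι → Mat d) : Prop :=
  (∀ x, (A x).PosSemidef) ∧ ∑ x, A x = 1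

/-- The pair of states `ρ₁, ρ₂` is distinguishable by the observable `A`. -/
def Distinguishes {d : ℕ} {ι : Type} [Fintype ι] (A : ι → Mat d) (ρ₁ ρ₂ : Mat d) : Prop :=
  ∃ x, (ρ₁ * A x).trace ≠ (ρ₂ * A x).trace

/-- Informational completeness of an observable. -/
def InfoComplete {d : ℕ} {ι : Type} [Fintype ι] (A : ι → Mat d) : Prop :=
  ∀ ρ₁ ρ₂ : Mat d, IsState ρ₁ → IsState ρ₂ →
    (∀ x, (ρ₁ * A x).trace = (ρ₂ * A x).trace) → ρ₁ = ρ₂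

/-- The positive semidefinite square root (removed from Mathlib; old definition restored). -/
noncomputable def Matrix.PosSemidef.sqrt {𝕜 : Type*} [RCLike 𝕜] {n : Type*} [Fintype n]
    [DecidableEq n] {A : Matrix n n 𝕜} (hA : A.PosSemidef) : Matrix n n 𝕜 :=
  hA.1.eigenvectorUnitary.1 * diagonal ((↑) ∘ (√·) ∘ hA.1.eigenvalues) *
  (star hA.1.eigenvectorUnitary : Matrix n n 𝕜)

lemma aux_sqrt_herm {d : ℕ} {M : Mat d} (hM : M.PosSemidef) : (hM.sqrt)ᴴ = hM.sqrt := by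
  unfold Matrix.PosSemidef.sqrt
  simp only [Matrix.conjTranspose_mul, Matrix.diagonal_conjTranspose, Matrix.mul_assoc]
  congr 2
  · ext i j
    simp [Matrix.diagonal_apply]
  · ext i j
    simp [Matrix.diagonal_apply]

lemma aux_sqrt_mul_self {d : ℕ} {M : Mat d} (hM : M.PosSemidef) : hM.sqrt * hM.sqrt = M := by
  have hU1 : star (hM.1.eigenvectorUnitary : Mat d) * (hM.1.eigenvectorUnitary : Mat d) = 1 :=
    Unitary.coe_star_mul_self hM.1.eigenvectorUnitary
  conv_rhs => rw [hM.1.spectral_theorem, Unitary.conjStarAlgAut_apply]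
  unfold Matrix.PosSemidef.sqrt
  simp only [Matrix.mul_assoc]
  rw [← Matrix.mul_assoc (star _) (hM.1.eigenvectorUnitary : Mat d), hU1, Matrix.one_mul,
    ← Matrix.mul_assoc (diagonal _) (diagonal _), Matrix.diagonal_mul_diagonal]
  congr 3
  ext i
  simp only [Function.comp_apply]
  rw [← RCLike.ofReal_mul, Real.mul_self_sqrt (hM.eigenvalues_nonneg i)]
-- trace of Cᴴ*C nonneg, zero iff C = 0
lemma aux_trace_nonneg {d : ℕ} (C : Mat d) : 0 ≤ (Cᴴ * C).trace := by
  simp only [Matrix.trace, Matrix.diag, Matrix.mul_apply, Matrix.conjTranspose_apply]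
  exact Finset.sum_nonneg fun j _ => Finset.sum_nonneg fun k _ => star_mul_self_nonneg _

lemma aux_trace_zero {d : ℕ} (C : Mat d) (h : (Cᴴ * C).trace = 0) : C = 0 := by
  simp only [Matrix.trace, Matrix.diag, Matrix.mul_apply, Matrix.conjTranspose_apply] at h
  have h1 := (Finset.sum_eq_zero_iff_of_nonneg (fun j _ =>
    Finset.sum_nonneg fun k _ => star_mul_self_nonneg (C k j))).mp h
  ext k j
  have h2 := (Finset.sum_eq_zero_iff_of_nonneg (fun k _ =>
    star_mul_self_nonneg (C k j))).mp (h1 j (Finset.mem_univ j)) k (Finset.mem_univ k)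
  simpa [Complex.star_def, ← Complex.normSq_eq_conj_mul_self, Complex.ofReal_eq_zero, Complex.normSq_eq_zero] using h2

lemma aux_commute_sqrt {d : ℕ} {M : Mat d} (hM : M.PosSemidef) {X : Mat d}
    (h : Commute X M) : Commute X hM.sqrt := by
  set U : Mat d := (hM.1.eigenvectorUnitary : Mat d) with hUdef
  have hU1 : star U * U = 1 := Unitary.coe_star_mul_self hM.1.eigenvectorUnitary
  have hU2 : U * star U = 1 := Unitary.coe_mul_star_self hM.1.eigenvectorUnitary
  set ev := hM.1.eigenvalues with hev
  have hmul : ∀ P Q : Mat d, (star U * P * U) * (star U * Q * U) = star U * (P * Q) * U := by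
    intro P Q
    simp only [Matrix.mul_assoc]
    rw [show U * (star U * (Q * U)) = Q * U from by rw [← Matrix.mul_assoc, hU2, Matrix.one_mul]]
  have hmul' : ∀ P Q : Mat d, (U * P * star U) * (U * Q * star U) = U * (P * Q) * star U := by
    intro P Q
    simp only [Matrix.mul_assoc]
    rw [show star U * (U * (Q * star U)) = Q * star U from by
      rw [← Matrix.mul_assoc, hU1, Matrix.one_mul]]
  set Y : Mat d := star U * X * U with hYdef
  have hD : star U * M * U = diagonal (fun i => (ev i : ℂ)) := by
    have := hM.1.conjStarAlgAut_star_eigenvectorUnitary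
    rw [Unitary.conjStarAlgAut_star_apply] at this
    exact this
  have hYD : Y * diagonal (fun i => (ev i : ℂ)) = diagonal (fun i => (ev i : ℂ)) * Y := by
    rw [← hD, hYdef, hmul, hmul, h.eq]
  have key : ∀ i j, Y i j * (ev j : ℂ) = (ev i : ℂ) * Y i j := by
    intro i j
    have := congrFun (congrFun hYD i) j
    simpa [Matrix.mul_diagonal, Matrix.diagonal_mul] using this
  have hYE : Y * diagonal (fun i => ((Real.sqrt (ev i) : ℝ) : ℂ)) =
      diagonal (fun i => ((Real.sqrt (ev i) : ℝ) : ℂ)) * Y := by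
    ext i j
    simp only [Matrix.mul_diagonal, Matrix.diagonal_mul]
    by_cases hz : Y i j = 0
    · simp [hz]
    · have h1 := key i j
      rw [mul_comm ((ev i : ℂ))] at h1
      have h2 : (ev j : ℂ) = (ev i : ℂ) := mul_left_cancel₀ hz h1
      rw [Complex.ofReal_inj.mp h2, mul_comm]
  have hsqrt : hM.sqrt = U * diagonal (fun i => ((Real.sqrt (ev i) : ℝ) : ℂ)) * star U := by
    rw [Matrix.PosSemidef.sqrt]
    rfl
  have hX : U * Y * star U = X := by
    rw [hYdef]
    simp only [Matrix.mul_assoc]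
    rw [show star U * (X * (U * star U)) = star U * X from by rw [hU2, Matrix.mul_one],
      ← Matrix.mul_assoc, hU2, Matrix.one_mul]
  show X * hM.sqrt = hM.sqrt * X
  rw [hsqrt, ← hX, hmul', hmul', hYE]


theorem stmt11 {d : ℕ} (hd : 0 < d) {ι : Type} [Fintype ι] [DecidableEq ι]
    (A : ι → Mat d) (hA : IsPOVM A) :
    {X : Mat d | ∑ x, (hA.1 x).sqrt * X * (hA.1 x).sqrt = X} =
      {X : Mat d | ∀ x, Commute X (A x)} := by
  set B : ι → Mat d := fun x => (hA.1 x).sqrt with hBdef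
  change {X : Mat d | ∑ x, B x * X * B x = X} = _
  have hB : ∀ x, (B x)ᴴ = B x := fun x => aux_sqrt_herm (hA.1 x)
  have hBB : ∀ x, B x * B x = A x := fun x => aux_sqrt_mul_self (hA.1 x)
  have hsum : ∑ x, B x * B x = 1 := by simp only [hBB]; exact hA.2
  ext X
  simp only [Set.mem_setOf_eq]
  constructor
  · intro hX
    -- hard direction
    have hXh : ∑ x, B x * Xᴴ * B x = Xᴴ := by
      have := congrArg conjTranspose hX
      simp only [Matrix.conjTranspose_sum, Matrix.conjTranspose_mul, hB,
        ← Matrix.mul_assoc] at this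
      exact this
    have hX' : ∑ x, B x * X * B x = X := hX
    set C : ι → Mat d := fun x => B x * X - X * B x with hCdef
    have expand : ∀ x, (C x)ᴴ * C x =
        Xᴴ * (B x * B x) * X - Xᴴ * (B x * X * B x) - (B x * Xᴴ * B x) * X
          + B x * (Xᴴ * X) * B x := by
      intro x
      simp only [hCdef, Matrix.conjTranspose_sub, Matrix.conjTranspose_mul, hB]
      noncomm_ring
    have e1 : ∑ x, Xᴴ * (B x * B x) * X = Xᴴ * X := by
      have h1 : ∑ x, Xᴴ * (B x * B x) * X = Xᴴ * (∑ x, B x * B x) * X := by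
        rw [Finset.mul_sum, Finset.sum_mul]
      rw [h1, hsum, Matrix.mul_one]
    have e2 : ∑ x, Xᴴ * (B x * X * B x) = Xᴴ * X := by
      rw [← Finset.mul_sum, hX']
    have e3 : ∑ x, (B x * Xᴴ * B x) * X = Xᴴ * X := by
      rw [← Finset.sum_mul, hXh]
    have hsumC : ∑ x, (C x)ᴴ * C x = (∑ x, B x * (Xᴴ * X) * B x) - Xᴴ * X := by
      simp only [expand]
      rw [Finset.sum_add_distrib, Finset.sum_sub_distrib, Finset.sum_sub_distrib, e1, e2, e3]
      abel
    have htrD : (∑ x, B x * (Xᴴ * X) * B x).trace = (Xᴴ * X).trace := by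
      rw [Matrix.trace_sum]
      have h1 : ∀ x : ι, (B x * (Xᴴ * X) * B x).trace = (B x * B x * (Xᴴ * X)).trace := by
        intro x
        rw [Matrix.trace_mul_cycle]
      simp only [h1]
      rw [← Matrix.trace_sum, ← Finset.sum_mul, hsum, Matrix.one_mul]
    have htr : ∑ x, ((C x)ᴴ * C x).trace = 0 := by
      rw [← Matrix.trace_sum, hsumC, Matrix.trace_sub, htrD, sub_self]
    have hall := (Finset.sum_eq_zero_iff_of_nonneg
      (fun x _ => aux_trace_nonneg (C x))).mp htr
    intro x
    have hC0 : C x = 0 := aux_trace_zero (C x) (hall x (Finset.mem_univ x))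
    have hE : B x * X = X * B x := by
      have := sub_eq_zero.mp hC0
      exact this
    show X * A x = A x * X
    rw [← hBB]
    calc X * (B x * B x) = (X * B x) * B x := by rw [Matrix.mul_assoc]
      _ = (B x * X) * B x := by rw [hE]
      _ = B x * (X * B x) := by rw [Matrix.mul_assoc]
      _ = B x * (B x * X) := by rw [hE]
      _ = (B x * B x) * X := by rw [Matrix.mul_assoc]
  · intro hcomm
    show ∑ x, B x * X * B x = X
    have hc : ∀ x, X * B x = B x * X := fun x =>
      (aux_commute_sqrt (hA.1 x) (hcomm x)).eq
    have h1 : ∀ x : ι, B x * X * B x = B x * B x * X := by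
      intro x
      calc B x * X * B x = B x * (X * B x) := by rw [Matrix.mul_assoc]
        _ = B x * (B x * X) := by rw [hc]
        _ = B x * B x * X := by rw [Matrix.mul_assoc]
    simp only [h1]
    rw [← Finset.sum_mul, hsum, Matrix.one_mul]
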